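/- Fix 0 < ε < 1/4 and let S_ε = π(U) ⊂ 𝕋² where U = U₁ ∪ U₂ as in Definition 3.5, and π : ℝ² → 𝕋² = (ℝ/ℤ)² is the projection. Let θ_x, θ_z ∈ S_ε and θ_y ∈ 𝕋² with 2θ_y = θ_x + θ_z. Write x = π⁻¹(θ_x), y = π⁻¹(θ_y), z = π⁻¹(θ_z) ∈ [0,1)² and d = (z - x)/2. If |d₁ + d₂| ≤ ε/1000, then (1-{x₁})² + (1-{z₁})² - 2(1-{y₁})² ≥ 2d₁². -/

import Mathlib

instance : Fact ((0:ℝ) < 1) := ⟨zero_lt_one⟩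

/-- The nonstandard fractional map `{·} : [0,1) → [0,1/2)`. -/
noncomputable def br (t : ℝ) : ℝ := if t < 1/2 then t else t - 1/2

/-- The set `U₁` from Definition 3.5 of the paper. -/
def U1 : Set (ℝ × ℝ) :=
  {v | (v ∈ Set.Ico (0:ℝ) (1/2) ×ˢ Set.Ico (1/2:ℝ) 1 ∪
        Set.Ico (1/2:ℝ) 1 ×ˢ Set.Ico (0:ℝ) (1/2)) ∧ v.1 + v.2 < 3/4}

/-- The set `U₂` from Definition 3.5 of the paper. -/
def U2 (ε : ℝ) : Set (ℝ × ℝ) :=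
  {v | v ∈ Set.Ico (0:ℝ) (1/2) ×ˢ Set.Ico (0:ℝ) 1 ∧ 3/4 + ε < v.1 + v.2 ∧ v.1 + v.2 < 5/4}

/-- The projection `ℝ² → 𝕋²`. -/
noncomputable def torusProj (v : ℝ × ℝ) : AddCircle (1:ℝ) × AddCircle (1:ℝ) :=
  ((v.1 : AddCircle (1:ℝ)), (v.2 : AddCircle (1:ℝ)))

/-- The unique representative in `[0,1)` of a point of `ℝ/ℤ`. -/
noncomputable def rep (θ : AddCircle (1:ℝ)) : ℝ := (AddCircle.equivIco 1 0 θ : ℝ)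

/-- The representative in `[0,1)²` of a point of `𝕋²`. -/
noncomputable def rep2 (θ : AddCircle (1:ℝ) × AddCircle (1:ℝ)) : ℝ × ℝ :=
  (rep θ.1, rep θ.2)

lemma br_lt {t : ℝ} (h : t < 1/2) : br t = t := if_pos h

lemma br_ge {t : ℝ} (h : ¬ t < 1/2) : br t = t - 1/2 := if_neg h

lemma coe_rep (θ : AddCircle (1:ℝ)) : ((rep θ : ℝ) : AddCircle (1:ℝ)) = θ :=
  (AddCircle.equivIco 1 0).symm_apply_apply θ

lemma rep_mem (θ : AddCircle (1:ℝ)) : rep θ ∈ Set.Ico (0:ℝ) 1 := by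
  simpa [rep] using (AddCircle.equivIco 1 0 θ).2

lemma rep_coe {t : ℝ} (ht : t ∈ Set.Ico (0:ℝ) 1) :
    rep ((t : ℝ) : AddCircle (1:ℝ)) = t := by
  have h := coe_rep ((t : ℝ) : AddCircle (1:ℝ))
  have hm : rep ((t : ℝ) : AddCircle (1:ℝ)) ∈ Set.Ico (0:ℝ) (0+1) := by
    simpa using rep_mem _
  have ht' : t ∈ Set.Ico (0:ℝ) (0+1) := by simpa using ht
  exact (AddCircle.coe_eq_coe_iff_of_mem_Ico hm ht').mp h

lemma U_box (ε : ℝ) {v : ℝ × ℝ} (h : v ∈ U1 ∪ U2 ε) :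
    v.1 ∈ Set.Ico (0:ℝ) 1 ∧ v.2 ∈ Set.Ico (0:ℝ) 1 := by
  rcases h with ⟨h1 | h1, _⟩ | ⟨⟨h1, h2⟩, _⟩
  · exact ⟨⟨h1.1.1, by linarith [h1.1.2]⟩, ⟨by linarith [h1.2.1], h1.2.2⟩⟩
  · exact ⟨⟨by linarith [h1.1.1], h1.1.2⟩, ⟨h1.2.1, by linarith [h1.2.2]⟩⟩
  · exact ⟨⟨h1.1, by linarith [h1.2]⟩, h2⟩

lemma rep2_torusProj {u : ℝ × ℝ} (h1 : u.1 ∈ Set.Ico (0:ℝ) 1)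
    (h2 : u.2 ∈ Set.Ico (0:ℝ) 1) : rep2 (torusProj u) = u := by
  unfold rep2 torusProj
  exact Prod.ext (rep_coe h1) (rep_coe h2)

set_option maxHeartbeats 1600000 in
theorem freiman_two (ε : ℝ) (hε : 0 < ε) (hε' : ε < 1/4)
    (θx θz : AddCircle (1:ℝ) × AddCircle (1:ℝ))
    (θy : AddCircle (1:ℝ) × AddCircle (1:ℝ))
    (hθx : θx ∈ torusProj '' (U1 ∪ U2 ε)) (hθz : θz ∈ torusProj '' (U1 ∪ U2 ε))
    (hap : 2 • θy = θx + θz)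
    (x y z d : ℝ × ℝ)
    (hx : x = rep2 θx) (hy : y = rep2 θy) (hz : z = rep2 θz)
    (hd : d = (1/2 : ℝ) • (z - x))
    (hsmall : |d.1 + d.2| ≤ ε/1000) :
    (1 - br x.1)^2 + (1 - br z.1)^2 - 2 * (1 - br y.1)^2 ≥ 2 * d.1^2 := by
  obtain ⟨ux, hux, hux2⟩ := hθx
  obtain ⟨uz, huz, huz2⟩ := hθz
  have hxu : x = ux := by
    rw [hx, ← hux2, rep2_torusProj (U_box ε hux).1 (U_box ε hux).2]
  have hzu : z = uz := by
    rw [hz, ← huz2, rep2_torusProj (U_box ε huz).1 (U_box ε huz).2]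
  have hxU : x ∈ U1 ∪ U2 ε := hxu ▸ hux
  have hzU : z ∈ U1 ∪ U2 ε := hzu ▸ huz
  -- coordinate ranges
  have hxb := U_box ε hxU
  have hzb := U_box ε hzU
  have hx10 : (0:ℝ) ≤ x.1 := hxb.1.1
  have hx11 : x.1 < 1 := hxb.1.2
  have hz10 : (0:ℝ) ≤ z.1 := hzb.1.1
  have hz11 : z.1 < 1 := hzb.1.2
  have hyb : (0:ℝ) ≤ y.1 ∧ y.1 < 1 := by
    rw [hy]; exact ⟨(rep_mem _).1, (rep_mem _).2⟩
  -- the arithmetic progression relation on first coordinates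
  have h1 : 2 • θy.1 = θx.1 + θz.1 := by
    have := congrArg Prod.fst hap; simpa using this
  have hap1 : ((2*y.1 : ℝ) : AddCircle (1:ℝ)) = ((x.1 + z.1 : ℝ) : AddCircle (1:ℝ)) := by
    rw [hx, hy, hz]
    show ((2 * rep θy.1 : ℝ) : AddCircle (1:ℝ)) = ((rep θx.1 + rep θz.1 : ℝ) : AddCircle (1:ℝ))
    rw [two_mul, AddCircle.coe_add, coe_rep, AddCircle.coe_add, coe_rep, coe_rep,
      ← h1, two_nsmul]
  have hkex : ∃ k : ℤ, 2*y.1 - (x.1 + z.1) = k := by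
    have : ((2*y.1 - (x.1+z.1) : ℝ) : AddCircle (1:ℝ)) = 0 := by
      rw [AddCircle.coe_sub, hap1, sub_self]
    obtain ⟨n, hn⟩ := (AddCircle.coe_eq_zero_iff _).mp this
    exact ⟨n, by simpa using hn.symm⟩
  obtain ⟨k, hk⟩ := hkex
  have hkbR1 : (-2:ℝ) < (k:ℝ) := by nlinarith [hyb.1, hyb.2]
  have hkbR2 : (k:ℝ) < 2 := by nlinarith [hyb.1, hyb.2]
  have hkb1 : (-2:ℤ) < k := by exact_mod_cast hkbR1
  have hkb2 : k < 2 := by exact_mod_cast hkbR2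
  have hK : (k:ℝ) = -1 ∨ (k:ℝ) = 0 ∨ (k:ℝ) = 1 := by
    have h2 : k = -1 ∨ k = 0 ∨ k = 1 := by omega
    rcases h2 with h | h | h <;> subst h <;> norm_num
  -- d coordinates
  have hd1 : d.1 = (z.1 - x.1)/2 := by rw [hd]; simp [Prod.smul_fst]; ring
  have hd2 : d.2 = (z.2 - x.2)/2 := by rw [hd]; simp [Prod.smul_snd]; ring
  have habs := abs_le.mp hsmall
  -- membership case data
  have hxcase : (x.1 < 1/2 ∧ 1/2 ≤ x.2 ∧ x.1 + x.2 < 3/4) ∨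
      (1/2 ≤ x.1 ∧ 0 ≤ x.2 ∧ x.1 + x.2 < 3/4) ∨
      (x.1 < 1/2 ∧ 3/4 + ε < x.1 + x.2 ∧ x.1 + x.2 < 5/4) := by
    rcases hxU with ⟨h1 | h1, h2⟩ | ⟨⟨h1, _⟩, h2, h3⟩
    · exact Or.inl ⟨h1.1.2, h1.2.1, h2⟩
    · exact Or.inr (Or.inl ⟨h1.1.1, h1.2.1, h2⟩)
    · exact Or.inr (Or.inr ⟨h1.2, h2, h3⟩)
  have hzcase : (z.1 < 1/2 ∧ 1/2 ≤ z.2 ∧ z.1 + z.2 < 3/4) ∨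
      (1/2 ≤ z.1 ∧ 0 ≤ z.2 ∧ z.1 + z.2 < 3/4) ∨
      (z.1 < 1/2 ∧ 3/4 + ε < z.1 + z.2 ∧ z.1 + z.2 < 5/4) := by
    rcases hzU with ⟨h1 | h1, h2⟩ | ⟨⟨h1, _⟩, h2, h3⟩
    · exact Or.inl ⟨h1.1.2, h1.2.1, h2⟩
    · exact Or.inr (Or.inl ⟨h1.1.1, h1.2.1, h2⟩)
    · exact Or.inr (Or.inr ⟨h1.2, h2, h3⟩)
  by_cases hA : x.1 < 1/2 <;> by_cases hC : z.1 < 1/2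
  · -- both first coordinates in [0, 1/2)
    have hbrx : br x.1 = x.1 := br_lt hA
    have hbrz : br z.1 = z.1 := br_lt hC
    have hbry : br y.1 = (x.1 + z.1)/2 := by
      rcases hK with h | h | h <;> rw [h] at hk
      · linarith [hyb.1]
      · rw [br_lt (by linarith : y.1 < 1/2)]; linarith
      · rw [br_ge (by push_neg; linarith : ¬ y.1 < 1/2)]; linarith
    rw [hbrx, hbrz, hbry, hd1]
    exact ge_of_eq (by ring)
  · -- x.1 < 1/2 ≤ z.1 : mixed case
    push_neg at hC
    have hzR : 0 ≤ z.2 ∧ z.1 + z.2 < 3/4 := by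
      rcases hzcase with h | h | h
      · linarith [h.1]
      · exact ⟨h.2.1, h.2.2⟩
      · linarith [h.1]
    have hxL : 1/2 ≤ x.2 ∧ x.1 + x.2 < 3/4 := by
      rcases hxcase with h | h | h
      · exact ⟨h.2.1, h.2.2⟩
      · linarith [h.1]
      · -- x ∈ U₂ contradicts closeness of sums
        exfalso
        have : d.1 + d.2 = ((z.1 + z.2) - (x.1 + x.2))/2 := by rw [hd1, hd2]; ring
        linarith [habs.1, habs.2, h.2.1, hzR.2]
    have hx14 : x.1 < 1/4 := by linarith [hxL.1, hxL.2]
    have hz34 : z.1 < 3/4 := by linarith [hzR.1, hzR.2]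
    have hbrx : br x.1 = x.1 := br_lt hA
    have hbrz : br z.1 = z.1 - 1/2 := br_ge (by push_neg; linarith)
    have hbry : br y.1 = (x.1 + z.1)/2 := by
      rcases hK with h | h | h <;> rw [h] at hk
      · linarith [hyb.1]
      · rw [br_lt (by linarith : y.1 < 1/2)]; linarith
      · rw [br_ge (by push_neg; linarith : ¬ y.1 < 1/2)]; linarith
    rw [hbrx, hbrz, hbry, hd1]
    nlinarith [hz34, hx10]
  · -- z.1 < 1/2 ≤ x.1 : mixed case (symmetric)
    push_neg at hA
    have hxR : 0 ≤ x.2 ∧ x.1 + x.2 < 3/4 := by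
      rcases hxcase with h | h | h
      · linarith [h.1]
      · exact ⟨h.2.1, h.2.2⟩
      · linarith [h.1]
    have hzL : 1/2 ≤ z.2 ∧ z.1 + z.2 < 3/4 := by
      rcases hzcase with h | h | h
      · exact ⟨h.2.1, h.2.2⟩
      · linarith [h.1]
      · exfalso
        have : d.1 + d.2 = ((z.1 + z.2) - (x.1 + x.2))/2 := by rw [hd1, hd2]; ring
        linarith [habs.1, habs.2, h.2.1, hxR.2]
    have hz14 : z.1 < 1/4 := by linarith [hzL.1, hzL.2]
    have hx34 : x.1 < 3/4 := by linarith [hxR.1, hxR.2]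
    have hbrx : br x.1 = x.1 - 1/2 := br_ge (by push_neg; linarith)
    have hbrz : br z.1 = z.1 := br_lt hC
    have hbry : br y.1 = (x.1 + z.1)/2 := by
      rcases hK with h | h | h <;> rw [h] at hk
      · linarith [hyb.1]
      · rw [br_lt (by linarith : y.1 < 1/2)]; linarith
      · rw [br_ge (by push_neg; linarith : ¬ y.1 < 1/2)]; linarith
    rw [hbrx, hbrz, hbry, hd1]
    nlinarith [hx34, hz10]
  · -- both first coordinates in [1/2, 1)
    push_neg at hA hC
    have hbrx : br x.1 = x.1 - 1/2 := br_ge (by push_neg; linarith)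
    have hbrz : br z.1 = z.1 - 1/2 := br_ge (by push_neg; linarith)
    have hbry : br y.1 = (x.1 + z.1 - 1)/2 := by
      rcases hK with h | h | h <;> rw [h] at hk
      · rw [br_lt (by linarith : y.1 < 1/2)]; linarith
      · rw [br_ge (by push_neg; linarith : ¬ y.1 < 1/2)]; linarith
      · linarith [hyb.2]
    rw [hbrx, hbrz, hbry, hd1]
    exact ge_of_eq (by ring)
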